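/- arXiv:2604.17432 — 2 statements merged into one kernel-verified Lean document; each statement's English description precedes it below -/
import Mathlib

section
/- (Local sparse estimate for the maximal part) Let μ be a nonnegative Radon measure on ℝⁿ with ‖μ‖_{n−αp} < ∞, p_j ∈ (1,∞), 1/p = ∑ 1/p_j, 0 < α < mn, p > 0. Let S ⊆ D be an η-sparse family and Q₀ ∈ D. Then ∫_{Q₀} ( ∑_{S ∈ S, S ⊆ Q₀} |S|^{α/n} ∏_j (|S|^{-1} ∫_S |f_j|) 1_{E_S(S)} )^p dμ ≲ η^{-1} ‖μ‖_{n−αp} ∏_{j=1}^m ‖f_j‖_{L^{p_j}(Q₀)}^p. -/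
open MeasureTheory ENNReal

noncomputable section

variable {n : ℕ}

/-- Axis-parallel cube with lower corner `a` and side length `r` (half-open). -/
def cube (a : Fin n → ℝ) (r : ℝ) : Set (Fin n → ℝ) :=
  {y | ∀ i, a i ≤ y i ∧ y i < a i + r}

/-- The dyadic cube `2^{-k}(m + [0,1)^n)`. -/
def dyadicCube (k : ℤ) (mv : Fin n → ℤ) : Set (Fin n → ℝ) :=
  cube (fun i => (mv i : ℝ) * (2 : ℝ) ^ (-k)) ((2 : ℝ) ^ (-k))

/-- The concentric triple `3Q` of the cube with corner `a` and side `r`. -/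
def tripleCube (a : Fin n → ℝ) (r : ℝ) : Set (Fin n → ℝ) :=
  cube (fun i => a i - r) (3 * r)

/-- The Morrey norm `‖f‖_{M^{p,p₀}}`. -/
def morreyNorm (p p0 : ℝ) (f : (Fin n → ℝ) → ℝ) : ℝ≥0∞ :=
  ⨆ (a : Fin n → ℝ) (r : ℝ) (_ : 0 < r),
    volume (cube a r) ^ (1 / p0 - 1 / p) *
      (∫⁻ x in cube a r, ENNReal.ofReal |f x| ^ p) ^ (1 / p)

/-- The product Morrey norm `‖f⃗‖_{M^{P⃗,p₀}}`. -/
def prodMorreyNorm {m : ℕ} (P : Fin m → ℝ) (p p0 : ℝ)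
    (f : Fin m → (Fin n → ℝ) → ℝ) : ℝ≥0∞ :=
  ⨆ (a : Fin n → ℝ) (r : ℝ) (_ : 0 < r),
    volume (cube a r) ^ (1 / p0 - 1 / p) *
      ∏ j, (∫⁻ x in cube a r, ENNReal.ofReal |f j x| ^ P j) ^ (1 / P j)

/-- The Radon–Morrey norm `‖g‖_{M_μ^{q,q₀}}`. -/
def radonMorreyNorm (μ : Measure (Fin n → ℝ)) (q q0 : ℝ)
    (g : (Fin n → ℝ) → ℝ≥0∞) : ℝ≥0∞ :=
  ⨆ (a : Fin n → ℝ) (r : ℝ) (_ : 0 < r),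
    volume (cube a r) ^ (1 / q0 - 1 / q) * (∫⁻ x in cube a r, g x ^ q ∂μ) ^ (1 / q)

/-- The growth norm `‖μ‖_β := sup_Q μ(Q)/ℓ_Q^β`. -/
def measureGrowthNorm (μ : Measure (Fin n → ℝ)) (β : ℝ) : ℝ≥0∞ :=
  ⨆ (a : Fin n → ℝ) (r : ℝ) (_ : 0 < r), μ (cube a r) / ENNReal.ofReal r ^ β

/-- The `m`-sublinear fractional maximal operator `𝔐_α`. -/
def fracMaximal {m : ℕ} (α : ℝ) (f : Fin m → (Fin n → ℝ) → ℝ)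
    (x : Fin n → ℝ) : ℝ≥0∞ :=
  ⨆ (a : Fin n → ℝ) (r : ℝ) (_ : 0 < r) (_ : x ∈ cube a r),
    ENNReal.ofReal r ^ (α - (m : ℝ) * n) *
      ∏ j, ∫⁻ y in cube a r, ENNReal.ofReal |f j y|

/-- The dyadic `m`-sublinear fractional maximal operator `𝔐_α^𝒟`. -/
def dyadicFracMaximal {m : ℕ} (α : ℝ) (f : Fin m → (Fin n → ℝ) → ℝ)
    (x : Fin n → ℝ) : ℝ≥0∞ :=
  ⨆ (k : ℤ) (mv : Fin n → ℤ) (_ : x ∈ dyadicCube k mv),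
    ENNReal.ofReal ((2 : ℝ) ^ (-k)) ^ (α - (m : ℝ) * n) *
      ∏ j, ∫⁻ y in dyadicCube k mv, ENNReal.ofReal |f j y|

/-- The dyadic `m`-linear fractional integral operator `ℑ_α^𝒟`. -/
def dyadicFracIntegral {m : ℕ} (α : ℝ) (f : Fin m → (Fin n → ℝ) → ℝ)
    (x : Fin n → ℝ) : ℝ≥0∞ :=
  ∑' qk : ℤ × (Fin n → ℤ),
    (dyadicCube qk.1 qk.2).indicator
      (fun _ => ENNReal.ofReal ((2 : ℝ) ^ (-qk.1)) ^ (α - (m : ℝ) * n) *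
        ∏ j, ∫⁻ y in dyadicCube qk.1 qk.2, ENNReal.ofReal |f j y|) x

/-- The `m`-linear fractional integral operator `ℑ_α` (with Euclidean distances). -/
def fracIntegral {m : ℕ} (α : ℝ) (f : Fin m → (Fin n → ℝ) → ℝ)
    (x : Fin n → ℝ) : ℝ≥0∞ :=
  ∫⁻ y : Fin m → Fin n → ℝ,
    (∏ j, ENNReal.ofReal |f j (y j)|) /
      ENNReal.ofReal ((∑ j, Real.sqrt (∑ i, (x i - y j i) ^ 2)) ^ ((m : ℝ) * n - α))


section AuxLemmas

lemma dyadicCube_eq_pi (k : ℤ) (mv : Fin n → ℤ) :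
    dyadicCube k mv = Set.pi Set.univ (fun i =>
      Set.Ico ((mv i : ℝ) * (2:ℝ)^(-k)) ((mv i : ℝ) * (2:ℝ)^(-k) + (2:ℝ)^(-k))) := by
  ext x; simp [dyadicCube, cube, Set.mem_pi]

lemma measurableSet_dyadicCube (k : ℤ) (mv : Fin n → ℤ) :
    MeasurableSet (dyadicCube k mv) := by
  rw [dyadicCube_eq_pi]
  exact MeasurableSet.univ_pi (fun i => measurableSet_Ico)

lemma volume_dyadicCube (k : ℤ) (mv : Fin n → ℤ) :
    volume (dyadicCube k mv) = ENNReal.ofReal ((2:ℝ)^(-k)) ^ n := by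
  rw [dyadicCube_eq_pi, volume_pi_pi]
  simp [Real.volume_Ico]

lemma dyadicCube_nonempty (k : ℤ) (mv : Fin n → ℤ) :
    (dyadicCube k mv).Nonempty := by
  refine ⟨fun i => (mv i : ℝ) * (2:ℝ)^(-k), fun i => ⟨le_refl _, ?_⟩⟩
  have : (0:ℝ) < (2:ℝ)^(-k) := zpow_pos (by norm_num) _
  linarith

lemma gen_le_of_subset (hn : 0 < n) {k k' : ℤ} {mv mv' : Fin n → ℤ}
    (h : dyadicCube k mv ⊆ dyadicCube k' mv') : k' ≤ k := by
  by_contra hlt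
  push_neg at hlt
  have hv := measure_mono (μ := volume) h
  rw [volume_dyadicCube, volume_dyadicCube] at hv
  have h1 : (2:ℝ)^(-k') < (2:ℝ)^(-k) := zpow_lt_zpow_right₀ (by norm_num) (by omega)
  have h2 : ENNReal.ofReal ((2:ℝ)^(-k')) < ENNReal.ofReal ((2:ℝ)^(-k)) :=
    (ENNReal.ofReal_lt_ofReal_iff (zpow_pos (by norm_num) _)).2 h1
  exact absurd hv (not_le.2 (ENNReal.pow_lt_pow_left hn.ne' h2))

lemma dyadicCube_subset_dyadicCube {k k' : ℤ} {mv mv' : Fin n → ℤ} (hk : k ≤ k')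
    (hx : (dyadicCube k mv ∩ dyadicCube k' mv').Nonempty) :
    dyadicCube k' mv' ⊆ dyadicCube k mv := by
  obtain ⟨t, ht, ht'⟩ := hx
  set d : ℕ := (k' - k).toNat with hdd
  have hD : (((2:ℤ)^d : ℤ) : ℝ) = (2:ℝ)^(k' - k) := by
    push_cast
    rw [← zpow_natCast (2:ℝ) d, hdd, Int.toNat_of_nonneg (sub_nonneg.2 hk)]
  have hsplit : (2:ℝ)^(-k) = (((2:ℤ)^d : ℤ) : ℝ) * (2:ℝ)^(-k') := by
    rw [hD, ← zpow_add₀ (by norm_num : (2:ℝ) ≠ 0)]; ring_nf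
  have hpos : (0:ℝ) < (2:ℝ)^(-k') := zpow_pos (by norm_num) _
  intro y hy i
  obtain ⟨h1, h1'⟩ := ht i
  obtain ⟨h2i, h2i'⟩ := ht' i
  obtain ⟨hy1, hy2⟩ := hy i
  simp only at h1 h1' h2i h2i' hy1 hy2
  have key1 : (mv i) * 2^d ≤ mv' i := by
    have h3 : (mv i : ℝ) * (((2:ℤ)^d : ℤ) : ℝ) < (mv' i : ℝ) + 1 := by
      have hlt : (mv i : ℝ) * (((2:ℤ)^d : ℤ) : ℝ) * (2:ℝ)^(-k') < ((mv' i : ℝ) + 1) * (2:ℝ)^(-k') := by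
        calc (mv i : ℝ) * (((2:ℤ)^d : ℤ) : ℝ) * (2:ℝ)^(-k') = (mv i : ℝ) * (2:ℝ)^(-k) := by
              rw [hsplit]; ring
          _ ≤ t i := h1
          _ < ((mv' i : ℝ) + 1) * (2:ℝ)^(-k') := by rw [add_mul, one_mul]; linarith
      exact lt_of_mul_lt_mul_right hlt hpos.le
    have : (mv i) * 2^d < mv' i + 1 := by exact_mod_cast h3
    omega
  have key2 : mv' i + 1 ≤ (mv i + 1) * 2^d := by
    have h3 : (mv' i : ℝ) < ((mv i : ℝ) + 1) * (((2:ℤ)^d : ℤ) : ℝ) := by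
      have hlt : (mv' i : ℝ) * (2:ℝ)^(-k') < ((mv i : ℝ) + 1) * (((2:ℤ)^d : ℤ) : ℝ) * (2:ℝ)^(-k') := by
        calc (mv' i : ℝ) * (2:ℝ)^(-k') ≤ t i := h2i
          _ < (mv i : ℝ) * (2:ℝ)^(-k) + (2:ℝ)^(-k) := h1'
          _ = ((mv i : ℝ) + 1) * (((2:ℤ)^d : ℤ) : ℝ) * (2:ℝ)^(-k') := by rw [hsplit]; ring
      exact lt_of_mul_lt_mul_right hlt hpos.le
    have : (mv' i : ℤ) < (mv i + 1) * 2^d := by exact_mod_cast h3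
    omega
  show ((mv i : ℝ) * (2:ℝ)^(-k) ≤ y i) ∧ (y i < (mv i : ℝ) * (2:ℝ)^(-k) + (2:ℝ)^(-k))
  have e1 : (mv i : ℝ) * (2:ℝ)^(-k) = ((mv i * 2^d : ℤ) : ℝ) * (2:ℝ)^(-k') := by
    rw [hsplit]; push_cast; ring
  have e2 : (mv i : ℝ) * (2:ℝ)^(-k) + (2:ℝ)^(-k) = (((mv i + 1) * 2^d : ℤ) : ℝ) * (2:ℝ)^(-k') := by
    rw [hsplit]; push_cast; ring
  constructor
  · rw [e1]
    calc ((mv i * 2^d : ℤ) : ℝ) * (2:ℝ)^(-k') ≤ (mv' i : ℝ) * (2:ℝ)^(-k') :=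
          mul_le_mul_of_nonneg_right (by exact_mod_cast key1) hpos.le
      _ ≤ y i := hy1
  · rw [e2]
    calc y i < (mv' i : ℝ) * (2:ℝ)^(-k') + (2:ℝ)^(-k') := hy2
      _ = ((mv' i + 1 : ℤ) : ℝ) * (2:ℝ)^(-k') := by push_cast; ring
      _ ≤ (((mv i + 1) * 2^d : ℤ) : ℝ) * (2:ℝ)^(-k') :=
          mul_le_mul_of_nonneg_right (by exact_mod_cast key2) hpos.le

lemma eq_of_same_gen {k : ℤ} {mv mv' : Fin n → ℤ}
    (h : (dyadicCube k mv ∩ dyadicCube k mv').Nonempty) : mv = mv' := by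
  have h1 : dyadicCube k mv' ⊆ dyadicCube k mv :=
    dyadicCube_subset_dyadicCube le_rfl h
  have h2 : dyadicCube k mv ⊆ dyadicCube k mv' :=
    dyadicCube_subset_dyadicCube le_rfl (by rwa [Set.inter_comm] at h)
  funext i
  have hc : (fun i => (mv i : ℝ) * (2:ℝ)^(-k)) ∈ dyadicCube k mv := by
    intro j; constructor
    · exact le_refl _
    · have : (0:ℝ) < (2:ℝ)^(-k) := zpow_pos (by norm_num) _; linarith
  have hm := h2 hc i
  simp only at hm
  obtain ⟨ha, hb⟩ := hm
  have hpos : (0:ℝ) < (2:ℝ)^(-k) := zpow_pos (by norm_num) _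
  have l1 : (mv' i : ℝ) ≤ (mv i : ℝ) := le_of_mul_le_mul_right (by linarith) hpos
  have l2 : (mv i : ℝ) < (mv' i : ℝ) + 1 := by
    rw [← mul_lt_mul_iff_left₀ hpos]; nlinarith [hb]
  have : (mv' i : ℤ) ≤ mv i := by exact_mod_cast l1
  have : (mv i : ℤ) < mv' i + 1 := by exact_mod_cast l2
  omega

lemma vol_ne_zero (k : ℤ) (mv : Fin n → ℤ) : volume (dyadicCube k mv) ≠ 0 := by
  rw [volume_dyadicCube]
  exact pow_ne_zero _ (by simp [ENNReal.ofReal_eq_zero, not_le]; exact zpow_pos (by norm_num) _)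

lemma vol_ne_top (k : ℤ) (mv : Fin n → ℤ) : volume (dyadicCube (n := n) k mv) ≠ ∞ := by
  rw [volume_dyadicCube]
  exact pow_ne_top ENNReal.ofReal_ne_top

/-- Weak type (1,1) estimate for the local dyadic maximal function. -/
lemma weak_type (hn : 0 < n) (k0 : ℤ) (m0 : Fin n → ℤ) (h : (Fin n → ℝ) → ℝ≥0∞)
    {lam : ℝ≥0∞} (hl0 : lam ≠ 0) (hlt : lam ≠ ∞) :
    volume (⋃ q ∈ {q : ℤ × (Fin n → ℤ) | dyadicCube q.1 q.2 ⊆ dyadicCube k0 m0 ∧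
        lam < (volume (dyadicCube q.1 q.2))⁻¹ * ∫⁻ y in dyadicCube q.1 q.2, h y}, dyadicCube q.1 q.2)
      ≤ lam⁻¹ * ∫⁻ y in dyadicCube k0 m0, h y := by
  set A : Set (ℤ × (Fin n → ℤ)) := {q | dyadicCube q.1 q.2 ⊆ dyadicCube k0 m0 ∧
      lam < (volume (dyadicCube q.1 q.2))⁻¹ * ∫⁻ y in dyadicCube q.1 q.2, h y} with hA
  set M : Set (ℤ × (Fin n → ℤ)) :=
    {q ∈ A | ∀ q' ∈ A, dyadicCube q.1 q.2 ⊆ dyadicCube q'.1 q'.2 → q' = q} with hM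
  -- every cube in A is contained in a maximal one
  have cover : ∀ q ∈ A, ∃ p ∈ M, dyadicCube q.1 q.2 ⊆ dyadicCube p.1 p.2 := by
    intro q hq
    have hbdd : ∀ k' : ℤ, (∃ m', ((k', m') ∈ A ∧ dyadicCube q.1 q.2 ⊆ dyadicCube k' m')) →
        k0 ≤ k' := by
      rintro k' ⟨m', hm', -⟩
      exact gen_le_of_subset hn hm'.1
    obtain ⟨ks, ⟨ms, hmsA, hmss⟩, hleast⟩ := Int.exists_least_of_bdd
      (P := fun k' => ∃ m', ((k', m') ∈ A ∧ dyadicCube q.1 q.2 ⊆ dyadicCube k' m'))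
      ⟨k0, hbdd⟩ ⟨q.1, q.2, hq, le_rfl⟩
    refine ⟨(ks, ms), ⟨hmsA, ?_⟩, hmss⟩
    intro q' hq' hsub
    have h1 : q'.1 ≤ ks := gen_le_of_subset hn hsub
    have h2 : ks ≤ q'.1 := hleast q'.1 ⟨q'.2, by simpa using hq', hmss.trans hsub⟩
    have hk : q'.1 = ks := le_antisymm h1 h2
    obtain ⟨x, hx⟩ := dyadicCube_nonempty (n := n) ks ms
    have hx' : x ∈ dyadicCube q'.1 q'.2 := hsub hx
    have : ms = q'.2 := eq_of_same_gen ⟨x, hx, by rwa [hk] at hx'⟩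
    exact Prod.ext hk (this.symm)
  -- maximal cubes are pairwise disjoint
  have hdisj : M.PairwiseDisjoint (fun q => dyadicCube q.1 q.2) := by
    intro q hq q' hq' hne
    by_contra hnd
    rw [Set.not_disjoint_iff_nonempty_inter] at hnd
    rcases le_total q.1 q'.1 with hle | hle
    · have hsub : dyadicCube q'.1 q'.2 ⊆ dyadicCube q.1 q.2 :=
        dyadicCube_subset_dyadicCube hle hnd
      exact hne (hq'.2 q hq.1 hsub)
    · have hsub : dyadicCube q.1 q.2 ⊆ dyadicCube q'.1 q'.2 :=
        dyadicCube_subset_dyadicCube hle (by rwa [Set.inter_comm] at hnd)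
      exact hne ((hq.2 q' hq'.1 hsub).symm)
  have hcov : (⋃ q ∈ A, dyadicCube q.1 q.2) ⊆ ⋃ q ∈ M, dyadicCube q.1 q.2 := by
    refine Set.iUnion₂_subset fun q hq => ?_
    obtain ⟨p, hp, hsub⟩ := cover q hq
    exact hsub.trans (Set.subset_biUnion_of_mem (u := fun q => dyadicCube q.1 q.2) hp)
  calc volume (⋃ q ∈ A, dyadicCube q.1 q.2) ≤ volume (⋃ q ∈ M, dyadicCube q.1 q.2) :=
        measure_mono hcov
    _ ≤ ∑' q : M, volume (dyadicCube q.1.1 q.1.2) := by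
        rw [Set.biUnion_eq_iUnion]; exact measure_iUnion_le _
    _ ≤ ∑' q : M, lam⁻¹ * ∫⁻ y in dyadicCube q.1.1 q.1.2, h y := by
        refine ENNReal.tsum_le_tsum fun q => ?_
        obtain ⟨-, hlam⟩ := q.2.1
        set v := volume (dyadicCube q.1.1 q.1.2) with hv
        have hv0 : v ≠ 0 := vol_ne_zero _ _
        have hvt : v ≠ ∞ := vol_ne_top _ _
        have step : lam * v ≤ ∫⁻ y in dyadicCube q.1.1 q.1.2, h y := by
          calc lam * v ≤ ((v⁻¹ * ∫⁻ y in dyadicCube q.1.1 q.1.2, h y) * v) :=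
                mul_le_mul_left hlam.le v
            _ = ∫⁻ y in dyadicCube q.1.1 q.1.2, h y := by
                rw [mul_comm v⁻¹, mul_assoc, ENNReal.inv_mul_cancel hv0 hvt, mul_one]
        calc v = lam⁻¹ * (lam * v) := by
              rw [← mul_assoc, ENNReal.inv_mul_cancel hl0 hlt, one_mul]
          _ ≤ lam⁻¹ * ∫⁻ y in dyadicCube q.1.1 q.1.2, h y := mul_le_mul_right step _
    _ = lam⁻¹ * ∑' q : M, ∫⁻ y in dyadicCube q.1.1 q.1.2, h y := ENNReal.tsum_mul_left
    _ ≤ lam⁻¹ * ∫⁻ y in dyadicCube k0 m0, h y := by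
        refine mul_le_mul_right ?_ _
        have hpd : Pairwise (Function.onFun Disjoint fun q : M => dyadicCube q.1.1 q.1.2) := by
          intro a b hab
          exact hdisj a.2 b.2 (fun hv => hab (Subtype.ext hv))
        rw [← lintegral_iUnion (fun q : M => measurableSet_dyadicCube _ _) hpd]
        refine lintegral_mono_set ?_
        refine Set.iUnion_subset fun q => (q.2.1).1

lemma etwo0 : (2:ℝ≥0∞) ≠ 0 := by norm_num
lemma etwot : (2:ℝ≥0∞) ≠ ∞ := by norm_num

lemma zpow_rpow (k : ℤ) (s : ℝ) : ((2:ℝ≥0∞)^k)^s = (2:ℝ≥0∞)^((k:ℝ)*s) := by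
  rw [← ENNReal.rpow_intCast 2 k, ← ENNReal.rpow_mul]

/-- Geometric tail bound. -/
lemma geo_bound {θ : ℝ} (hθ : 0 < θ) (b : ℝ≥0∞) :
    ∑' j : ℤ, (if (2:ℝ≥0∞)^j < b then (2:ℝ≥0∞)^((j:ℝ)*θ) else 0)
      ≤ (1 - (2:ℝ≥0∞)^(-θ))⁻¹ * b^θ := by
  set r : ℝ≥0∞ := (2:ℝ≥0∞)^(-θ) with hr
  have hrlt : r < 1 := by
    have h1 : (2:ℝ≥0∞)^(-θ) < (2:ℝ≥0∞)^(0:ℝ) :=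
      ENNReal.rpow_lt_rpow_of_exponent_lt (by norm_num) etwot (by linarith)
    rwa [ENNReal.rpow_zero] at h1
  have hc0 : (1 - r)⁻¹ ≠ 0 := by
    simp only [ne_eq, ENNReal.inv_eq_zero]
    exact (tsub_le_self.trans_lt ENNReal.one_lt_top).ne
  rcases eq_or_ne b 0 with rfl | hb0
  · simp
  rcases eq_or_ne b ∞ with rfl | hbt
  · rw [ENNReal.top_rpow_of_pos hθ, ENNReal.mul_top hc0]; exact le_top
  obtain ⟨K, hK1, hK2⟩ := ENNReal.exists_mem_Ioc_zpow hb0 hbt (by norm_num : (1:ℝ≥0∞) < 2) etwot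
  have step1 : ∀ j : ℤ, (if (2:ℝ≥0∞)^j < b then (2:ℝ≥0∞)^((j:ℝ)*θ) else 0)
      ≤ (if j ≤ K then (2:ℝ≥0∞)^((j:ℝ)*θ) else 0) := by
    intro j
    by_cases hj : (2:ℝ≥0∞)^j < b
    · have hjK : j ≤ K := by
        by_contra hKj
        push_neg at hKj
        have : (2:ℝ≥0∞)^(K+1) ≤ (2:ℝ≥0∞)^j := ENNReal.zpow_le_of_le (by norm_num) (by omega)
        exact absurd hj (not_lt.2 (le_trans hK2 this))
      simp [hj, hjK]
    · simp [hj]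
  calc ∑' j : ℤ, (if (2:ℝ≥0∞)^j < b then (2:ℝ≥0∞)^((j:ℝ)*θ) else 0)
      ≤ ∑' j : ℤ, (if j ≤ K then (2:ℝ≥0∞)^((j:ℝ)*θ) else 0) := ENNReal.tsum_le_tsum step1
    _ = ∑' i : ℕ, (fun j : ℤ => if j ≤ K then (2:ℝ≥0∞)^((j:ℝ)*θ) else 0) (K - (i:ℤ)) := by
        refine (Function.Injective.tsum_eq ?_ ?_).symm
        · intro a b hab; simp only at hab; omega
        · intro j hj
          simp only [Function.mem_support, ne_eq, ite_eq_right_iff, not_forall] at hj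
          obtain ⟨hjK, -⟩ := hj
          exact ⟨(K - j).toNat, by show K - ((K - j).toNat : ℤ) = j; omega⟩
    _ = ∑' i : ℕ, (2:ℝ≥0∞)^((K:ℝ)*θ) * r^i := by
        congr 1; funext i
        simp only [if_pos (show K - (i:ℤ) ≤ K by omega)]
        rw [hr, ← ENNReal.rpow_natCast ((2:ℝ≥0∞)^(-θ)) i, ← ENNReal.rpow_mul,
          ← ENNReal.rpow_add _ _ etwo0 etwot]
        congr 1; push_cast; ring
    _ = (2:ℝ≥0∞)^((K:ℝ)*θ) * (1 - r)⁻¹ := by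
        rw [ENNReal.tsum_mul_left, ENNReal.tsum_geometric]
    _ ≤ b^θ * (1 - r)⁻¹ := by
        refine mul_le_mul_left ?_ _
        rw [← zpow_rpow]
        exact ENNReal.rpow_le_rpow hK1.le hθ.le
    _ = (1 - r)⁻¹ * b^θ := mul_comm _ _

/-- The constant in the sparse Carleson embedding. -/
def coreC (q : ℝ) : ℝ≥0∞ := (2:ℝ≥0∞)^(2*q) * (1 - (2:ℝ≥0∞)^(1-q))⁻¹

lemma coreC_pos {q : ℝ} : 0 < coreC q := by
  rw [coreC]
  apply ENNReal.mul_pos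
  · exact (ENNReal.rpow_pos (by norm_num) etwot).ne'
  · simp only [ne_eq, ENNReal.inv_eq_zero]
    exact (tsub_le_self.trans_lt ENNReal.one_lt_top).ne

lemma coreC_lt_top {q : ℝ} (hq : 1 < q) : coreC q < ∞ := by
  rw [coreC]
  apply ENNReal.mul_lt_top
  · exact ENNReal.rpow_lt_top_of_nonneg (by linarith) etwot
  · rw [ENNReal.inv_lt_top]
    rw [tsub_pos_iff_lt]
    have h1 : (2:ℝ≥0∞)^(1-q) < (2:ℝ≥0∞)^(0:ℝ) :=
      ENNReal.rpow_lt_rpow_of_exponent_lt (by norm_num) etwot (by linarith)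
    rwa [ENNReal.rpow_zero] at h1

/-- Sparse Carleson-type embedding for a single function. -/
lemma core_est (hn : 0 < n) {q : ℝ} (hq : 1 < q) {η : ℝ} (hη : 0 < η)
    {ι : Type*} [Countable ι] (Qk : ι → ℤ) (Qm : ι → Fin n → ℤ) (E : ι → Set (Fin n → ℝ))
    (hEmeas : ∀ i, MeasurableSet (E i)) (hEsub : ∀ i, E i ⊆ dyadicCube (Qk i) (Qm i))
    (hEvol : ∀ i, ENNReal.ofReal η * volume (dyadicCube (Qk i) (Qm i)) ≤ volume (E i))
    (hEdisj : Pairwise (Function.onFun Disjoint E))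
    (k0 : ℤ) (m0 : Fin n → ℤ) (hsub : ∀ i, dyadicCube (Qk i) (Qm i) ⊆ dyadicCube k0 m0)
    (g : (Fin n → ℝ) → ℝ≥0∞) (hg : Measurable g) :
    ∑' i, volume (dyadicCube (Qk i) (Qm i)) *
        ((volume (dyadicCube (Qk i) (Qm i)))⁻¹ * ∫⁻ y in dyadicCube (Qk i) (Qm i), g y) ^ q
      ≤ (ENNReal.ofReal η)⁻¹ * coreC q * ∫⁻ y in dyadicCube k0 m0, g y ^ q := by
  have hη0 : ENNReal.ofReal η ≠ 0 := by simp [ENNReal.ofReal_eq_zero, not_le, hη]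
  have hηt : ENNReal.ofReal η ≠ ∞ := ENNReal.ofReal_ne_top
  have hηinv0 : (ENNReal.ofReal η)⁻¹ ≠ 0 := by simp [hηt]
  -- trivial case
  rcases eq_or_ne (∫⁻ y in dyadicCube k0 m0, g y ^ q) ∞ with htop | hfin
  · rw [htop, ENNReal.mul_top (mul_ne_zero hηinv0 coreC_pos.ne')]
    exact le_top
  -- the integral of g is finite
  have hgfin : (∫⁻ y in dyadicCube k0 m0, g y) < ∞ := by
    have hconj : q.HolderConjugate (q/(q-1)) := Real.HolderConjugate.conjExponent hq
    have hH := ENNReal.lintegral_mul_le_Lp_mul_Lq (volume.restrict (dyadicCube k0 m0)) hconj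
      hg.aemeasurable aemeasurable_const (g := fun _ => (1:ℝ≥0∞))
    simp only [Pi.mul_apply, mul_one, ENNReal.one_rpow, lintegral_const, one_mul] at hH
    refine lt_of_le_of_lt hH (ENNReal.mul_lt_top ?_ ?_)
    · exact ENNReal.rpow_lt_top_of_nonneg (one_div_nonneg.2 (by linarith)) hfin
    · exact ENNReal.rpow_lt_top_of_nonneg (one_div_nonneg.2 (div_nonneg (by linarith) (by linarith)))
        (by simp only [Measure.restrict_apply_univ]; exact vol_ne_top k0 m0)
  set v : ι → ℝ≥0∞ := fun i => volume (dyadicCube (Qk i) (Qm i)) with hv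
  set a : ι → ℝ≥0∞ := fun i => (v i)⁻¹ * ∫⁻ y in dyadicCube (Qk i) (Qm i), g y with ha
  have hv0 : ∀ i, v i ≠ 0 := fun i => vol_ne_zero _ _
  have hvt : ∀ i, v i ≠ ∞ := fun i => vol_ne_top _ _
  have hafin : ∀ i, a i ≠ ∞ := by
    intro i
    refine (ENNReal.mul_lt_top ?_ ?_).ne
    · simp [ENNReal.inv_lt_top, pos_iff_ne_zero, hv0 i]
    · exact lt_of_le_of_lt (lintegral_mono_set (hsub i)) hgfin
  -- step 1 : replace v i by η⁻¹ vol (E i)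
  have step1 : ∀ i, v i * a i ^ q ≤ (ENNReal.ofReal η)⁻¹ * (volume (E i) * a i ^ q) := by
    intro i
    have h1 : v i ≤ (ENNReal.ofReal η)⁻¹ * volume (E i) := by
      calc v i = (ENNReal.ofReal η)⁻¹ * (ENNReal.ofReal η * v i) := by
            rw [← mul_assoc, ENNReal.inv_mul_cancel hη0 hηt, one_mul]
        _ ≤ (ENNReal.ofReal η)⁻¹ * volume (E i) := mul_le_mul_right (hEvol i) _
    calc v i * a i ^ q ≤ ((ENNReal.ofReal η)⁻¹ * volume (E i)) * a i ^ q :=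
          mul_le_mul_left h1 _
      _ = (ENNReal.ofReal η)⁻¹ * (volume (E i) * a i ^ q) := by ring
  -- step 2 : layer decomposition
  set T : ℤ → ι → ℝ≥0∞ := fun k i =>
    if (2:ℝ≥0∞)^k < a i ∧ a i ≤ (2:ℝ≥0∞)^(k+1) then volume (E i) * ((2:ℝ≥0∞)^(k+1))^q else 0
    with hT
  have step2 : ∀ i, volume (E i) * a i ^ q ≤ ∑' k : ℤ, T k i := by
    intro i
    rcases eq_or_ne (a i) 0 with hai | hai
    · simp [hai, ENNReal.zero_rpow_of_pos (by linarith : (0:ℝ) < q)]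
    obtain ⟨K, hK1, hK2⟩ := ENNReal.exists_mem_Ioc_zpow hai (hafin i)
      (by norm_num : (1:ℝ≥0∞) < 2) etwot
    calc volume (E i) * a i ^ q ≤ volume (E i) * ((2:ℝ≥0∞)^(K+1))^q :=
          mul_le_mul_right (ENNReal.rpow_le_rpow hK2 (by linarith)) _
      _ = T K i := by rw [hT]; simp [hK1, hK2]
      _ ≤ ∑' k : ℤ, T k i := ENNReal.le_tsum K
  -- level sets and truncations
  set c : ℤ → ℝ≥0∞ := fun k => (2:ℝ≥0∞)^(k-1) with hc
  have hc0 : ∀ k, c k ≠ 0 := fun k => (ENNReal.zpow_pos etwo0 etwot _).ne'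
  have hct : ∀ k, c k ≠ ∞ := fun k => (ENNReal.zpow_lt_top etwo0 etwot _).ne
  set gk : ℤ → (Fin n → ℝ) → ℝ≥0∞ := fun k x => if c k < g x then g x else 0 with hgk
  have hgkm : ∀ k, Measurable (gk k) :=
    fun k => Measurable.ite (measurableSet_lt measurable_const hg) hg measurable_const
  have step3 : ∀ k : ℤ, ∑' i, T k i
      ≤ ((2:ℝ≥0∞)^(k+1))^q * ((c k)⁻¹ * ∫⁻ y in dyadicCube k0 m0, gk k y) := by
    intro k
    classical
    set D : ι → Set (Fin n → ℝ) := fun i =>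
      if (2:ℝ≥0∞)^k < a i ∧ a i ≤ (2:ℝ≥0∞)^(k+1) then E i else ∅ with hD
    have hTD : ∀ i, T k i = ((2:ℝ≥0∞)^(k+1))^q * volume (D i) := by
      intro i
      rw [hT, hD]
      by_cases hcond : (2:ℝ≥0∞)^k < a i ∧ a i ≤ (2:ℝ≥0∞)^(k+1)
      · simp [hcond, mul_comm]
      · simp [hcond]
    have hDm : ∀ i, MeasurableSet (D i) := by
      intro i
      rw [hD]
      dsimp only
      split
      · exact hEmeas i
      · exact MeasurableSet.empty
    have hDdisj : Pairwise (Function.onFun Disjoint D) := by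
      intro i j hij
      refine Disjoint.mono ?_ ?_ (hEdisj hij)
      · rw [hD]; dsimp only; split <;> simp
      · rw [hD]; dsimp only; split <;> simp
    have hDsub : (⋃ i, D i) ⊆ ⋃ q' ∈ {q' : ℤ × (Fin n → ℤ) |
        dyadicCube q'.1 q'.2 ⊆ dyadicCube k0 m0 ∧
        c k < (volume (dyadicCube q'.1 q'.2))⁻¹ * ∫⁻ y in dyadicCube q'.1 q'.2, gk k y},
        dyadicCube q'.1 q'.2 := by
      refine Set.iUnion_subset fun i => ?_
      rw [hD]
      dsimp only
      split
      case isTrue hcond =>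
        refine (hEsub i).trans ?_
        refine Set.subset_biUnion_of_mem (u := fun q' => dyadicCube q'.1 q'.2)
          (x := (Qk i, Qm i)) ?_
        refine ⟨hsub i, ?_⟩
        -- truncation argument
        have hbound : a i ≤ c k + (v i)⁻¹ * ∫⁻ y in dyadicCube (Qk i) (Qm i), gk k y := by
          have hgle : ∀ x, g x ≤ c k + gk k x := by
            intro x
            rw [hgk]
            by_cases hx : c k < g x
            · simp only [if_pos hx]; exact le_add_self
            · push_neg at hx
              simp only [if_neg (not_lt.2 hx)]
              exact hx.trans le_self_add
          have h1 : (∫⁻ y in dyadicCube (Qk i) (Qm i), g y)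
              ≤ c k * v i + ∫⁻ y in dyadicCube (Qk i) (Qm i), gk k y := by
            calc (∫⁻ y in dyadicCube (Qk i) (Qm i), g y)
                ≤ ∫⁻ y in dyadicCube (Qk i) (Qm i), (c k + gk k y) := lintegral_mono hgle
              _ = c k * v i + ∫⁻ y in dyadicCube (Qk i) (Qm i), gk k y := by
                  rw [lintegral_add_left measurable_const, lintegral_const,
                    Measure.restrict_apply_univ]
          calc a i = (v i)⁻¹ * ∫⁻ y in dyadicCube (Qk i) (Qm i), g y := rfl
            _ ≤ (v i)⁻¹ * (c k * v i + ∫⁻ y in dyadicCube (Qk i) (Qm i), gk k y) :=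
                mul_le_mul_right h1 _
            _ = c k + (v i)⁻¹ * ∫⁻ y in dyadicCube (Qk i) (Qm i), gk k y := by
                rw [mul_add]
                congr 1
                rw [mul_comm (c k) (v i), ← mul_assoc, ENNReal.inv_mul_cancel (hv0 i) (hvt i),
                  one_mul]
        have h2k : (2:ℝ≥0∞)^k = c k + c k := by
          have hzz : (2:ℝ≥0∞)^k = 2^(1:ℤ) * 2^(k-1) := by
            rw [← ENNReal.zpow_add etwo0 etwot]; congr 1; ring
          rw [hc]; dsimp only; rw [hzz, zpow_one, two_mul]
        have hlt : c k + c k < c k + (v i)⁻¹ * ∫⁻ y in dyadicCube (Qk i) (Qm i), gk k y :=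
          lt_of_lt_of_le (h2k ▸ hcond.1) hbound
        exact (ENNReal.add_lt_add_iff_left (hct k)).mp hlt
      case isFalse => simp
    calc ∑' i, T k i = ∑' i, ((2:ℝ≥0∞)^(k+1))^q * volume (D i) := by
          congr 1; funext i; exact hTD i
      _ = ((2:ℝ≥0∞)^(k+1))^q * ∑' i, volume (D i) := ENNReal.tsum_mul_left
      _ = ((2:ℝ≥0∞)^(k+1))^q * volume (⋃ i, D i) := by rw [measure_iUnion hDdisj hDm]
      _ ≤ ((2:ℝ≥0∞)^(k+1))^q * ((c k)⁻¹ * ∫⁻ y in dyadicCube k0 m0, gk k y) := by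
          refine mul_le_mul_right ?_ _
          exact (measure_mono hDsub).trans (weak_type hn k0 m0 (gk k) (hc0 k) (hct k))
  -- putting it together
  have step5 : ∑' k : ℤ, ((2:ℝ≥0∞)^(k+1))^q * ((c k)⁻¹ * ∫⁻ y in dyadicCube k0 m0, gk k y)
      ≤ coreC q * ∫⁻ y in dyadicCube k0 m0, g y ^ q := by
    set w : ℤ → ℝ≥0∞ := fun k => ((2:ℝ≥0∞)^(k+1))^q * (c k)⁻¹ with hw
    have hwt : ∀ k, w k ≠ ∞ := by
      intro k
      refine (ENNReal.mul_lt_top ?_ ?_).ne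
      · exact ENNReal.rpow_lt_top_of_nonneg (by linarith) (ENNReal.zpow_lt_top etwo0 etwot _).ne
      · simp [ENNReal.inv_lt_top, pos_iff_ne_zero, hc0 k]
    have hterm : ∀ k : ℤ, ((2:ℝ≥0∞)^(k+1))^q * ((c k)⁻¹ * ∫⁻ y in dyadicCube k0 m0, gk k y)
        = ∫⁻ y in dyadicCube k0 m0, w k * gk k y := by
      intro k
      rw [lintegral_const_mul' _ _ (hwt k), hw, mul_assoc]
    have hsum : ∑' k : ℤ, ((2:ℝ≥0∞)^(k+1))^q * ((c k)⁻¹ * ∫⁻ y in dyadicCube k0 m0, gk k y)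
        = ∫⁻ y in dyadicCube k0 m0, ∑' k : ℤ, w k * gk k y := by
      rw [lintegral_tsum (fun k => ((hgkm k).const_mul (w k)).aemeasurable)]
      congr 1; funext k; exact hterm k
    rw [hsum]
    have hpoint : ∀ y, ∑' k : ℤ, w k * gk k y ≤ coreC q * g y ^ q := by
      intro y
      have hrw : ∀ k : ℤ, w k * gk k y
          = g y * (if c k < g y then w k else 0) := by
        intro k
        rw [hgk]
        by_cases hx : c k < g y
        · simp only [if_pos hx]; ring
        · simp only [if_neg hx, mul_zero, mul_zero]
      calc ∑' k : ℤ, w k * gk k y = g y * ∑' k : ℤ, (if c k < g y then w k else 0) := by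
            rw [← ENNReal.tsum_mul_left]; congr 1; funext k; exact hrw k
        _ ≤ g y * ((2:ℝ≥0∞)^(2*q) * ((1 - (2:ℝ≥0∞)^(-(q-1)))⁻¹ * g y ^ (q-1))) := by
            refine mul_le_mul_right ?_ _
            have hre : ∑' k : ℤ, (if c k < g y then w k else 0)
                = ∑' j : ℤ, (if c (j+1) < g y then w (j+1) else 0) :=
              ((Equiv.addRight (1:ℤ)).tsum_eq
                (fun k => if c k < g y then w k else 0)).symm
            rw [hre]
            have hwj : ∀ j : ℤ, (if c (j+1) < g y then w (j+1) else 0)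
                = (2:ℝ≥0∞)^(2*q) * (if (2:ℝ≥0∞)^j < g y then (2:ℝ≥0∞)^((j:ℝ)*(q-1)) else 0) := by
              intro j
              have hcj : c (j+1) = (2:ℝ≥0∞)^j := by rw [hc]; congr 1; ring
              by_cases hx : (2:ℝ≥0∞)^j < g y
              · rw [if_pos (hcj ▸ hx), if_pos hx, hw]
                dsimp only
                rw [hcj, zpow_rpow, ← ENNReal.rpow_intCast (2:ℝ≥0∞) j, ← ENNReal.rpow_neg,
                  ← ENNReal.rpow_add _ _ etwo0 etwot, ← ENNReal.rpow_add _ _ etwo0 etwot]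
                congr 1
                push_cast
                ring
              · rw [if_neg (by rwa [hcj]), if_neg hx, mul_zero]
            calc ∑' j : ℤ, (if c (j+1) < g y then w (j+1) else 0)
                = ∑' j : ℤ, (2:ℝ≥0∞)^(2*q) *
                    (if (2:ℝ≥0∞)^j < g y then (2:ℝ≥0∞)^((j:ℝ)*(q-1)) else 0) := by
                  congr 1; funext j; exact hwj j
              _ = (2:ℝ≥0∞)^(2*q) * ∑' j : ℤ,
                    (if (2:ℝ≥0∞)^j < g y then (2:ℝ≥0∞)^((j:ℝ)*(q-1)) else 0) :=
                  ENNReal.tsum_mul_left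
              _ ≤ (2:ℝ≥0∞)^(2*q) * ((1 - (2:ℝ≥0∞)^(-(q-1)))⁻¹ * g y ^ (q-1)) :=
                  mul_le_mul_right (geo_bound (by linarith) (g y)) _
        _ = coreC q * g y ^ q := by
            rw [coreC, show (1:ℝ)-q = -(q-1) by ring]
            rw [show g y ^ q = g y ^ (1:ℝ) * g y ^ (q-1) by
              rw [← ENNReal.rpow_add_of_nonneg _ _ (by norm_num) (by linarith)]; norm_num]
            rw [ENNReal.rpow_one]
            ring
    calc (∫⁻ y in dyadicCube k0 m0, ∑' k : ℤ, w k * gk k y)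
        ≤ ∫⁻ y in dyadicCube k0 m0, coreC q * g y ^ q := lintegral_mono hpoint
      _ = coreC q * ∫⁻ y in dyadicCube k0 m0, g y ^ q :=
          lintegral_const_mul' _ _ (coreC_lt_top hq).ne
  -- final chain
  calc ∑' i, v i * a i ^ q
      ≤ ∑' i, (ENNReal.ofReal η)⁻¹ * (volume (E i) * a i ^ q) := ENNReal.tsum_le_tsum step1
    _ = (ENNReal.ofReal η)⁻¹ * ∑' i, (volume (E i) * a i ^ q) := ENNReal.tsum_mul_left
    _ ≤ (ENNReal.ofReal η)⁻¹ * ∑' i, ∑' k : ℤ, T k i :=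
        mul_le_mul_right (ENNReal.tsum_le_tsum step2) _
    _ = (ENNReal.ofReal η)⁻¹ * ∑' k : ℤ, ∑' i, T k i := by rw [ENNReal.tsum_comm]
    _ ≤ (ENNReal.ofReal η)⁻¹ * ∑' k : ℤ, ((2:ℝ≥0∞)^(k+1))^q *
          ((c k)⁻¹ * ∫⁻ y in dyadicCube k0 m0, gk k y) :=
        mul_le_mul_right (ENNReal.tsum_le_tsum step3) _
    _ ≤ (ENNReal.ofReal η)⁻¹ * (coreC q * ∫⁻ y in dyadicCube k0 m0, g y ^ q) :=
        mul_le_mul_right step5 _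
    _ = (ENNReal.ofReal η)⁻¹ * coreC q * ∫⁻ y in dyadicCube k0 m0, g y ^ q := by
        rw [mul_assoc]

/-- Hölder's inequality for tsums. -/
lemma tsum_prod_rpow_le {σ : Type*} [Countable σ] {m : ℕ} (F : Fin m → σ → ℝ≥0∞) {t : Fin m → ℝ}
    (ht : ∑ j, t j = 1) (ht0 : ∀ j, 0 ≤ t j) :
    ∑' s, ∏ j, F j s ^ t j ≤ ∏ j, (∑' s, F j s) ^ t j := by
  letI : MeasurableSpace σ := ⊤
  haveI : MeasurableSingletonClass σ := ⟨fun _ => MeasurableSpace.measurableSet_top⟩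
  have h1 : ∫⁻ s, ∏ j, F j s ^ t j ∂(Measure.count) ≤ ∏ j, (∫⁻ s, F j s ∂Measure.count) ^ t j :=
    ENNReal.lintegral_prod_norm_pow_le Finset.univ
      (fun j _ => (measurable_of_countable (F j)).aemeasurable) ht (fun j _ => ht0 j)
  simpa only [MeasureTheory.lintegral_count] using h1

/-- A measurable minorant with the same integrals over all dyadic cubes. -/
lemma exists_minorant (g : (Fin n → ℝ) → ℝ≥0∞) :
    ∃ h : (Fin n → ℝ) → ℝ≥0∞, Measurable h ∧ h ≤ g ∧
      ∀ (k : ℤ) (mv : Fin n → ℤ),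
        ∫⁻ y in dyadicCube k mv, h y = ∫⁻ y in dyadicCube k mv, g y := by
  have H : ∀ q : ℤ × (Fin n → ℤ), ∃ φ : (Fin n → ℝ) → ℝ≥0∞, Measurable φ ∧ φ ≤ g ∧
      (∫⁻ y in dyadicCube q.1 q.2, g y) = ∫⁻ y in dyadicCube q.1 q.2, φ y := fun q =>
    exists_measurable_le_lintegral_eq (volume.restrict (dyadicCube q.1 q.2)) g
  choose φ hφm hφle hφeq using H
  refine ⟨fun x => ⨆ q : ℤ × (Fin n → ℤ), φ q x, Measurable.iSup (fun q => hφm q), ?_, ?_⟩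
  · intro x
    exact iSup_le fun q => hφle q x
  · intro k mv
    refine le_antisymm (lintegral_mono fun x => iSup_le fun q => hφle q x) ?_
    rw [hφeq (k, mv)]
    exact lintegral_mono fun x => le_iSup (fun q => φ q x) (k, mv)

lemma measure_cube_le (μ : Measure (Fin n → ℝ)) (β : ℝ) (k : ℤ) (mv : Fin n → ℤ) :
    μ (dyadicCube k mv) ≤ measureGrowthNorm μ β * ENNReal.ofReal ((2:ℝ)^(-k)) ^ β := by
  have hr : (0:ℝ) < (2:ℝ)^(-k) := zpow_pos (by norm_num) _
  have h1 : μ (dyadicCube k mv) / ENNReal.ofReal ((2:ℝ)^(-k)) ^ β ≤ measureGrowthNorm μ β := by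
    rw [measureGrowthNorm]
    refine le_iSup_of_le (fun i => (mv i : ℝ) * (2:ℝ)^(-k)) ?_
    refine le_iSup_of_le ((2:ℝ)^(-k)) ?_
    exact le_iSup_of_le hr le_rfl
  refine (ENNReal.div_le_iff ?_ ?_).mp h1
  · rw [ENNReal.ofReal_rpow_of_pos hr]
    simp only [ne_eq, ENNReal.ofReal_eq_zero, not_le]
    exact Real.rpow_pos_of_pos hr _
  · rw [ENNReal.ofReal_rpow_of_pos hr]
    exact ENNReal.ofReal_ne_top

/-- `x ^ (∑ t j) = ∏ x ^ t j` for finite `x ≠ 0`. -/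
lemma rpow_sum_eq_prod {m : ℕ} (x : ℝ≥0∞) (hx0 : x ≠ 0) (hxt : x ≠ ∞) (t : Fin m → ℝ) :
    x ^ (∑ j, t j) = ∏ j, x ^ t j := by
  induction m with
  | zero => simp
  | succ m ih =>
    rw [Fin.sum_univ_succ, Fin.prod_univ_succ, ENNReal.rpow_add _ _ hx0 hxt, ih (fun j => t j.succ)]

lemma cube_term_algebra {m : ℕ} {P : Fin m → ℝ} (hP : ∀ j, 1 < P j) {p α : ℝ}
    (hppos : 0 < p) (hsum : ∑ j, p / P j = 1) (hn : 0 < n)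
    (x : ℝ≥0∞) (hx0 : x ≠ 0) (hxt : x ≠ ∞) (I : Fin m → ℝ≥0∞) :
    ((x^n) ^ (α/(n:ℝ)) * ∏ j, ((x^n)⁻¹ * I j)) ^ p * x ^ ((n:ℝ) - α*p)
      = ∏ j, ((x^n) * (((x^n)⁻¹ * I j) ^ P j)) ^ (p / P j) := by
  have hnR : ((n:ℝ)) ≠ 0 := Nat.cast_ne_zero.2 hn.ne'
  have hvrw : (x^n : ℝ≥0∞) = x ^ ((n:ℕ):ℝ) := (ENNReal.rpow_natCast x n).symm
  set A : Fin m → ℝ≥0∞ := fun j => (x^n)⁻¹ * I j with hA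
  have e1 : ((x^n) ^ (α/(n:ℝ)) * ∏ j, A j) ^ p
      = x ^ (α*p) * (∏ j, A j) ^ p := by
    rw [ENNReal.mul_rpow_of_nonneg _ _ hppos.le]
    congr 1
    rw [hvrw, ← ENNReal.rpow_mul, ← ENNReal.rpow_mul]
    congr 1
    field_simp
  have e2 : x ^ (α*p) * x ^ ((n:ℝ) - α*p) = x ^ ((n:ℕ):ℝ) := by
    rw [← ENNReal.rpow_add _ _ hx0 hxt]
    congr 1
    ring
  have e3 : (∏ j, A j) ^ p = ∏ j, ((A j) ^ (P j)) ^ (p / P j) := by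
    rw [← ENNReal.prod_rpow_of_nonneg hppos.le]
    congr 1
    funext j
    rw [← ENNReal.rpow_mul]
    congr 1
    have hPj : P j ≠ 0 := ne_of_gt (by linarith [hP j])
    field_simp
  have e4 : (x^n : ℝ≥0∞) = ∏ j, (x^n : ℝ≥0∞) ^ (p / P j) := by
    have h0 : (x^n : ℝ≥0∞) ≠ 0 := pow_ne_zero _ hx0
    have ht : (x^n : ℝ≥0∞) ≠ ∞ := ENNReal.pow_ne_top hxt
    calc (x^n : ℝ≥0∞) = (x^n) ^ (1:ℝ) := (ENNReal.rpow_one _).symm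
      _ = (x^n) ^ (∑ j, p / P j) := by rw [hsum]
      _ = ∏ j, (x^n : ℝ≥0∞) ^ (p / P j) := rpow_sum_eq_prod _ h0 ht _
  calc ((x^n) ^ (α/(n:ℝ)) * ∏ j, A j) ^ p * x ^ ((n:ℝ) - α*p)
      = (x ^ (α*p) * (∏ j, A j) ^ p) * x ^ ((n:ℝ) - α*p) := by rw [e1]
    _ = (x ^ (α*p) * x ^ ((n:ℝ) - α*p)) * (∏ j, A j) ^ p := by ring
    _ = (x^n : ℝ≥0∞) * (∏ j, A j) ^ p := by rw [e2, hvrw]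
    _ = (∏ j, (x^n : ℝ≥0∞) ^ (p / P j)) * ∏ j, ((A j) ^ (P j)) ^ (p / P j) := by
        rw [← e4, ← e3]
    _ = ∏ j, ((x^n : ℝ≥0∞) ^ (p / P j) * ((A j) ^ (P j)) ^ (p / P j)) :=
        Finset.prod_mul_distrib.symm
    _ = ∏ j, ((x^n) * ((A j) ^ (P j))) ^ (p / P j) := by
        congr 1
        funext j
        rw [ENNReal.mul_rpow_of_nonneg _ _ (div_nonneg hppos.le (by linarith [hP j]))]

end AuxLemmas

theorem statement12 (hn : 0 < n) (m : ℕ) (hm : 0 < m)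
    (P : Fin m → ℝ) (hP : ∀ j, 1 < P j) (p α : ℝ)
    (hp : 1 / p = ∑ j, 1 / P j) (hppos : 0 < p)
    (hα : 0 < α) (hαmn : α < (m : ℝ) * n) :
    ∃ C : ℝ≥0∞, 0 < C ∧ C < ∞ ∧
      ∀ μ : Measure (Fin n → ℝ), IsLocallyFiniteMeasure μ →
        measureGrowthNorm μ (n - α * p) < ∞ →
        ∀ η : ℝ, 0 < η → η < 1 →
        ∀ (𝒮 : Set (ℤ × (Fin n → ℤ))) (E : ℤ × (Fin n → ℤ) → Set (Fin n → ℝ)),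
          (∀ S ∈ 𝒮, MeasurableSet (E S) ∧ E S ⊆ dyadicCube S.1 S.2 ∧
            ENNReal.ofReal η * volume (dyadicCube S.1 S.2) ≤ volume (E S)) →
          𝒮.PairwiseDisjoint E →
          ∀ (k0 : ℤ) (m0 : Fin n → ℤ) (f : Fin m → (Fin n → ℝ) → ℝ),
            (∫⁻ x in dyadicCube k0 m0,
              (∑' S : {S : ℤ × (Fin n → ℤ) //
                  S ∈ 𝒮 ∧ dyadicCube S.1 S.2 ⊆ dyadicCube k0 m0},
                (E S.1).indicator
                  (fun _ => volume (dyadicCube S.1.1 S.1.2) ^ (α / (n : ℝ)) *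
                    ∏ j, (volume (dyadicCube S.1.1 S.1.2))⁻¹ *
                      ∫⁻ y in dyadicCube S.1.1 S.1.2, ENNReal.ofReal |f j y|) x) ^ p
              ∂μ) ≤
            C * (ENNReal.ofReal η)⁻¹ * measureGrowthNorm μ (n - α * p) *
              ∏ j, (∫⁻ y in dyadicCube k0 m0, ENNReal.ofReal |f j y| ^ P j) ^ (p / P j) := by
  classical
  have htj0 : ∀ j, 0 ≤ p / P j := fun j => div_nonneg hppos.le (by linarith [hP j])
  have hsum : ∑ j, p / P j = 1 := by
    have h1 : ∀ j, p / P j = p * (1 / P j) := fun j => by rw [mul_one_div]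
    rw [Finset.sum_congr rfl (fun j _ => h1 j), ← Finset.mul_sum, ← hp,
      mul_one_div, div_self hppos.ne']
  refine ⟨∏ j, coreC (P j) ^ (p / P j), ?_, ?_, ?_⟩
  · rw [pos_iff_ne_zero, Finset.prod_ne_zero_iff]
    exact fun j _ => (ENNReal.rpow_pos coreC_pos (coreC_lt_top (hP j)).ne).ne'
  · exact ENNReal.prod_lt_top
      (fun j _ => ENNReal.rpow_lt_top_of_nonneg (htj0 j) (coreC_lt_top (hP j)).ne)
  intro μ hloc hμfin η hη0 hη1 𝒮 E hE hdisj k0 m0 f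
  have hηR0 : ENNReal.ofReal η ≠ 0 := by simp [ENNReal.ofReal_eq_zero, not_le, hη0]
  have hηRt : ENNReal.ofReal η ≠ ∞ := ENNReal.ofReal_ne_top
  have hηinv0 : (ENNReal.ofReal η)⁻¹ ≠ 0 := by simp [hηRt]
  have hηinvt : (ENNReal.ofReal η)⁻¹ ≠ ∞ := by simp [hηR0]
  -- measurable minorants
  choose h hmeas hle hint using
    fun j => exists_minorant (n := n) (fun y => ENNReal.ofReal |f j y|)
  -- replace f by h in the left-hand side
  simp only [← hint]
  set σ := {S : ℤ × (Fin n → ℤ) // S ∈ 𝒮 ∧ dyadicCube S.1 S.2 ⊆ dyadicCube k0 m0} with hσ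
  set c : σ → ℝ≥0∞ := fun S => volume (dyadicCube S.1.1 S.1.2) ^ (α / (n:ℝ)) *
    ∏ j, (volume (dyadicCube S.1.1 S.1.2))⁻¹ * ∫⁻ y in dyadicCube S.1.1 S.1.2, h j y with hc
  -- pointwise bound
  have key1 : ∀ x, (∑' S : σ, (E S.1).indicator (fun _ => c S) x) ^ p
      ≤ ∑' S : σ, (E S.1).indicator (fun _ => c S ^ p) x := by
    intro x
    by_cases hx : ∃ S : σ, x ∈ E S.1
    · obtain ⟨S₀, hS₀⟩ := hx
      have hsingle : ∀ S : σ, S ≠ S₀ → (E S.1).indicator (fun _ => c S) x = 0 := by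
        intro S hS
        have hne : S.1 ≠ S₀.1 := fun hv => hS (Subtype.ext hv)
        have hd := hdisj S.2.1 S₀.2.1 hne
        have hxnot : x ∉ E S.1 := fun hmem =>
          (Set.disjoint_left.mp hd hmem) hS₀
        exact Set.indicator_of_notMem hxnot _
      rw [tsum_eq_single S₀ hsingle, Set.indicator_of_mem hS₀]
      calc c S₀ ^ p = (E S₀.1).indicator (fun _ => c S₀ ^ p) x := by
            rw [Set.indicator_of_mem hS₀]
        _ ≤ ∑' S : σ, (E S.1).indicator (fun _ => c S ^ p) x := ENNReal.le_tsum S₀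
    · push_neg at hx
      have : ∀ S : σ, (E S.1).indicator (fun _ => c S) x = 0 :=
        fun S => Set.indicator_of_notMem (hx S) _
      rw [tsum_congr this, tsum_zero, ENNReal.zero_rpow_of_pos hppos]
      exact zero_le
  have hEm : ∀ S : σ, MeasurableSet (E S.1) := fun S => (hE S.1 S.2.1).1
  have hEsub : ∀ S : σ, E S.1 ⊆ dyadicCube S.1.1 S.1.2 := fun S => (hE S.1 S.2.1).2.1
  have hEvol : ∀ S : σ, ENNReal.ofReal η * volume (dyadicCube S.1.1 S.1.2) ≤ volume (E S.1) :=
    fun S => (hE S.1 S.2.1).2.2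
  set N := measureGrowthNorm μ ((n:ℝ) - α * p) with hN
  set xs : σ → ℝ≥0∞ := fun S => ENNReal.ofReal ((2:ℝ)^(-S.1.1)) with hxs
  have hxs0 : ∀ S, xs S ≠ 0 := by
    intro S
    simp only [hxs, ne_eq, ENNReal.ofReal_eq_zero, not_le]
    exact zpow_pos (by norm_num) _
  have hxst : ∀ S, xs S ≠ ∞ := fun S => ENNReal.ofReal_ne_top
  set B : Fin m → σ → ℝ≥0∞ := fun j S => volume (dyadicCube S.1.1 S.1.2) *
    ((volume (dyadicCube S.1.1 S.1.2))⁻¹ * ∫⁻ y in dyadicCube S.1.1 S.1.2, h j y) ^ P j with hB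
  have halg : ∀ S : σ, c S ^ p * xs S ^ ((n:ℝ) - α * p) = ∏ j, B j S ^ (p / P j) := by
    intro S
    rw [hc, hB]
    dsimp only
    rw [volume_dyadicCube]
    exact cube_term_algebra hP hppos hsum hn (xs S) (hxs0 S) (hxst S) _
  have hXle : ∀ j, ∑' S : σ, B j S ≤ (ENNReal.ofReal η)⁻¹ * coreC (P j) *
      ∫⁻ y in dyadicCube k0 m0, ENNReal.ofReal |f j y| ^ P j := by
    intro j
    have hEdisj' : Pairwise (Function.onFun Disjoint fun S : σ => E S.1) := by
      intro a b hab
      exact hdisj a.2.1 b.2.1 (fun hv => hab (Subtype.ext hv))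
    calc ∑' S : σ, B j S
        ≤ (ENNReal.ofReal η)⁻¹ * coreC (P j) * ∫⁻ y in dyadicCube k0 m0, h j y ^ P j :=
          core_est hn (hP j) hη0 (fun S : σ => S.1.1) (fun S => S.1.2) (fun S => E S.1)
            hEm hEsub hEvol hEdisj' k0 m0 (fun S => S.2.2) (h j) (hmeas j)
      _ ≤ (ENNReal.ofReal η)⁻¹ * coreC (P j) *
            ∫⁻ y in dyadicCube k0 m0, ENNReal.ofReal |f j y| ^ P j := by
          refine mul_le_mul_right (lintegral_mono fun y => ?_) _
          exact ENNReal.rpow_le_rpow (hle j y) (by linarith [hP j])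
  calc (∫⁻ x in dyadicCube k0 m0,
        (∑' S : σ, (E S.1).indicator (fun _ => c S) x) ^ p ∂μ)
      ≤ ∫⁻ x in dyadicCube k0 m0, (∑' S : σ, (E S.1).indicator (fun _ => c S ^ p) x) ∂μ :=
        lintegral_mono fun x => key1 x
    _ = ∑' S : σ, ∫⁻ x in dyadicCube k0 m0, (E S.1).indicator (fun _ => c S ^ p) x ∂μ :=
        lintegral_tsum (fun S => (measurable_const.indicator (hEm S)).aemeasurable)
    _ ≤ ∑' S : σ, N * (c S ^ p * xs S ^ ((n:ℝ) - α * p)) := by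
        refine ENNReal.tsum_le_tsum fun S => ?_
        rw [lintegral_indicator_const (hEm S), Measure.restrict_apply (hEm S)]
        calc c S ^ p * μ (E S.1 ∩ dyadicCube k0 m0)
            ≤ c S ^ p * (N * xs S ^ ((n:ℝ) - α * p)) := by
              refine mul_le_mul_right ?_ _
              refine le_trans (measure_mono ((Set.inter_subset_left).trans (hEsub S))) ?_
              exact measure_cube_le μ _ _ _
          _ = N * (c S ^ p * xs S ^ ((n:ℝ) - α * p)) := by ring
    _ = N * ∑' S : σ, (c S ^ p * xs S ^ ((n:ℝ) - α * p)) := ENNReal.tsum_mul_left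
    _ = N * ∑' S : σ, ∏ j, B j S ^ (p / P j) := by
        congr 1; exact tsum_congr halg
    _ ≤ N * ∏ j, (∑' S : σ, B j S) ^ (p / P j) :=
        mul_le_mul_right (tsum_prod_rpow_le B hsum htj0) _
    _ ≤ N * ∏ j, ((ENNReal.ofReal η)⁻¹ * coreC (P j) *
          ∫⁻ y in dyadicCube k0 m0, ENNReal.ofReal |f j y| ^ P j) ^ (p / P j) := by
        refine mul_le_mul_right (Finset.prod_le_prod' fun j _ => ?_) _
        exact ENNReal.rpow_le_rpow (hXle j) (htj0 j)
    _ = (∏ j, coreC (P j) ^ (p / P j)) * (ENNReal.ofReal η)⁻¹ * N *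
          ∏ j, (∫⁻ y in dyadicCube k0 m0, ENNReal.ofReal |f j y| ^ P j) ^ (p / P j) := by
        have hexp : ∀ j : Fin m, ((ENNReal.ofReal η)⁻¹ * coreC (P j) *
            ∫⁻ y in dyadicCube k0 m0, ENNReal.ofReal |f j y| ^ P j) ^ (p / P j)
            = (ENNReal.ofReal η)⁻¹ ^ (p / P j) * coreC (P j) ^ (p / P j) *
              (∫⁻ y in dyadicCube k0 m0, ENNReal.ofReal |f j y| ^ P j) ^ (p / P j) := by
          intro j
          rw [ENNReal.mul_rpow_of_nonneg _ _ (htj0 j), ENNReal.mul_rpow_of_nonneg _ _ (htj0 j)]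
        rw [Finset.prod_congr rfl (fun j _ => hexp j)]
        rw [Finset.prod_mul_distrib, Finset.prod_mul_distrib]
        rw [← rpow_sum_eq_prod _ hηinv0 hηinvt, hsum, ENNReal.rpow_one]
        ring
end
end

section
/- (Tail estimate for cubes strictly containing Q₀) Let μ be a nonnegative Radon measure on ℝⁿ with ‖μ‖_{n−αp} < ∞, and let 0 < p ≤ p₀ < n/α, p_j ∈ (1,∞), 1/p = ∑ 1/p_j. Let S ⊆ D be a sparse family and Q₀ ∈ D. Then |Q₀|^{1/p₀−1/p} ( ∫_{Q₀} ( ∑_{S ∈ S, S ⊋ Q₀} |S|^{α/n} ∏_j (|S|^{-1}∫_S |f_j|) 1_{E_S(S)} )^p dμ )^{1/p} ≲ ‖μ‖_{n−αp}^{1/p} ‖f⃗‖_{M^{P⃗,p₀}}. -/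
open MeasureTheory ENNReal

noncomputable section

variable {n : ℕ}

section Aux

open MeasureTheory

/-- Hölder against the constant 1: `∫ f ≤ (∫ f^q)^{1/q} μ(univ)^{1-1/q}`,
with no measurability assumption on `f` (proved via simple functions). -/
private lemma lintegral_le_Lq {X : Type*} [MeasurableSpace X] (μ : Measure X)
    (f : X → ℝ≥0∞) {q : ℝ} (hq : 1 < q) :
    ∫⁻ x, f x ∂μ ≤ (∫⁻ x, f x ^ q ∂μ) ^ (1 / q) * μ Set.univ ^ (1 - 1 / q) := by
  have hpq : q.HolderConjugate (Real.conjExponent q) := Real.HolderConjugate.conjExponent hq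
  have hexp : 1 / Real.conjExponent q = 1 - 1 / q := by
    rw [one_div, one_div, ← hpq.one_sub_inv]
  rw [lintegral_def]
  refine iSup₂_le fun g hg => ?_
  rw [← MeasureTheory.SimpleFunc.lintegral_eq_lintegral]
  calc ∫⁻ x, g x ∂μ
      ≤ (∫⁻ x, g x ^ q ∂μ) ^ (1 / q) * μ Set.univ ^ (1 - 1 / q) := by
        have key := ENNReal.lintegral_mul_le_Lp_mul_Lq μ hpq g.measurable.aemeasurable
          (aemeasurable_const (b := (1 : ℝ≥0∞)))
        simp only [Pi.mul_apply, mul_one, ENNReal.one_rpow, lintegral_one] at key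
        rw [← hexp]
        exact key
    _ ≤ (∫⁻ x, f x ^ q ∂μ) ^ (1 / q) * μ Set.univ ^ (1 - 1 / q) := by
      refine mul_le_mul_left (ENNReal.rpow_le_rpow (lintegral_mono fun x =>
        ENNReal.rpow_le_rpow (hg x) (by positivity)) (by positivity)) _

private lemma ennreal_rpow_sum {ι : Type*} (s : Finset ι) (x : ℝ≥0∞) (hx : x ≠ 0)
    (hx' : x ≠ ∞) (c : ι → ℝ) : x ^ (∑ j ∈ s, c j) = ∏ j ∈ s, x ^ c j := by
  induction s using Finset.cons_induction with
  | empty => simp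
  | cons a s ha ih => rw [Finset.sum_cons, Finset.prod_cons, ENNReal.rpow_add _ _ hx hx', ih]

private lemma volume_cube_eq {n : ℕ} (a : Fin n → ℝ) {r : ℝ} (hr : 0 ≤ r) :
    volume (cube a r) = ENNReal.ofReal r ^ (n : ℝ) := by
  have h : cube a r = Set.pi Set.univ fun i => Set.Ico (a i) (a i + r) := by
    ext y; simp [cube, Set.mem_pi]
  rw [h, volume_pi_pi]
  simp only [Real.volume_Ico, add_sub_cancel_left]
  rw [Finset.prod_const, Finset.card_univ, Fintype.card_fin, ← ENNReal.rpow_natCast]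

end Aux


theorem statement13 (hn : 0 < n) (m : ℕ) (hm : 0 < m)
    (P : Fin m → ℝ) (hP : ∀ j, 1 < P j) (p p0 α : ℝ)
    (hp : 1 / p = ∑ j, 1 / P j) (hppos : 0 < p) (hpp0 : p ≤ p0)
    (hα : 0 < α) (hp0n : p0 < n / α) (hαmn : α < (m : ℝ) * n) :
    ∃ C : ℝ≥0∞, 0 < C ∧ C < ∞ ∧
      ∀ μ : Measure (Fin n → ℝ), IsLocallyFiniteMeasure μ →
        measureGrowthNorm μ (n - α * p) < ∞ →
        ∀ η : ℝ, 0 < η → η < 1 →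
        ∀ (𝒮 : Set (ℤ × (Fin n → ℤ))) (E : ℤ × (Fin n → ℤ) → Set (Fin n → ℝ)),
          (∀ S ∈ 𝒮, MeasurableSet (E S) ∧ E S ⊆ dyadicCube S.1 S.2 ∧
            ENNReal.ofReal η * volume (dyadicCube S.1 S.2) ≤ volume (E S)) →
          𝒮.PairwiseDisjoint E →
          ∀ (k0 : ℤ) (m0 : Fin n → ℤ) (f : Fin m → (Fin n → ℝ) → ℝ),
            volume (dyadicCube k0 m0) ^ (1 / p0 - 1 / p) *
              (∫⁻ x in dyadicCube k0 m0,
                (∑' S : {S : ℤ × (Fin n → ℤ) //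
                    S ∈ 𝒮 ∧ dyadicCube k0 m0 ⊂ dyadicCube S.1 S.2},
                  (E S.1).indicator
                    (fun _ => volume (dyadicCube S.1.1 S.1.2) ^ (α / (n : ℝ)) *
                      ∏ j, (volume (dyadicCube S.1.1 S.1.2))⁻¹ *
                        ∫⁻ y in dyadicCube S.1.1 S.1.2, ENNReal.ofReal |f j y|) x) ^ p
                ∂μ) ^ (1 / p) ≤
            C * measureGrowthNorm μ (n - α * p) ^ (1 / p) *
              prodMorreyNorm P p p0 f := by
  classical
  refine ⟨1, zero_lt_one, ENNReal.one_lt_top, ?_⟩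
  intro μ _ _ η _ _ 𝒮 E _ hdisj k0 m0 f
  set N := prodMorreyNorm P p p0 f with hNdef
  set G := measureGrowthNorm μ ((n : ℝ) - α * p) with hGdef
  set Q0 := dyadicCube k0 m0 with hQ0def
  set r0 : ℝ := (2 : ℝ) ^ (-k0) with hr0def
  have hr0 : 0 < r0 := by positivity
  set t : ℝ≥0∞ := ENNReal.ofReal r0 with htdef
  have ht0 : t ≠ 0 := (ENNReal.ofReal_pos.mpr hr0).ne'
  have httop : t ≠ ∞ := ENNReal.ofReal_ne_top
  have hvolQ0 : volume Q0 = t ^ (n : ℝ) := volume_cube_eq _ hr0.le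
  have hp0pos : 0 < p0 := hppos.trans_le hpp0
  have hnR : (0 : ℝ) < n := Nat.cast_pos.mpr hn
  have hap0 : p0 * α < n := (lt_div_iff₀ hα).mp hp0n
  have hδ : α / (n : ℝ) - 1 / p0 ≤ 0 := by
    rw [sub_nonpos, div_le_div_iff₀ hnR hp0pos]
    nlinarith
  have hQ0pos : volume Q0 ≠ 0 := by
    rw [hvolQ0]; exact (ENNReal.rpow_pos (ENNReal.ofReal_pos.mpr hr0) httop).ne'
  have hQ0top : volume Q0 ≠ ∞ := by
    rw [hvolQ0]; exact ENNReal.rpow_ne_top_of_nonneg hnR.le httop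
  set B : ℝ≥0∞ := volume Q0 ^ (α / (n : ℝ) - 1 / p0) * N with hBdef
  -- the per-cube bound
  have hc : ∀ S : ℤ × (Fin n → ℤ), Q0 ⊂ dyadicCube S.1 S.2 →
      volume (dyadicCube S.1 S.2) ^ (α / (n : ℝ)) *
        ∏ j, (volume (dyadicCube S.1 S.2))⁻¹ *
          ∫⁻ y in dyadicCube S.1 S.2, ENNReal.ofReal |f j y| ≤ B := by
    intro S hSsub
    set V := volume (dyadicCube S.1 S.2) with hVdef
    have hrS : (0 : ℝ) < (2 : ℝ) ^ (-S.1) := by positivity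
    have hV : V = ENNReal.ofReal ((2 : ℝ) ^ (-S.1)) ^ (n : ℝ) := volume_cube_eq _ hrS.le
    have hV0 : V ≠ 0 := by
      rw [hV]; exact (ENNReal.rpow_pos (ENNReal.ofReal_pos.mpr hrS) ENNReal.ofReal_ne_top).ne'
    have hVt : V ≠ ∞ := by
      rw [hV]; exact ENNReal.rpow_ne_top_of_nonneg hnR.le ENNReal.ofReal_ne_top
    set I : Fin m → ℝ≥0∞ := fun j => ∫⁻ y in dyadicCube S.1 S.2, ENNReal.ofReal |f j y|
      with hIdef
    set J : Fin m → ℝ≥0∞ := fun j => ∫⁻ y in dyadicCube S.1 S.2, ENNReal.ofReal |f j y| ^ P j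
      with hJdef
    have hfac : ∀ j, V⁻¹ * I j ≤ V ^ (-(1 / P j)) * J j ^ (1 / P j) := by
      intro j
      have hhold : I j ≤ J j ^ (1 / P j) * V ^ (1 - 1 / P j) := by
        have h := lintegral_le_Lq (volume.restrict (dyadicCube S.1 S.2))
          (fun y => ENNReal.ofReal |f j y|) (hP j)
        simpa [Measure.restrict_apply_univ] using h
      calc V⁻¹ * I j ≤ V⁻¹ * (J j ^ (1 / P j) * V ^ (1 - 1 / P j)) :=
            mul_le_mul_right hhold _
        _ = V ^ (-(1 / P j)) * J j ^ (1 / P j) := by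
            rw [mul_comm (J j ^ (1 / P j)) (V ^ (1 - 1 / P j)), ← mul_assoc,
              ← ENNReal.rpow_neg_one V, ← ENNReal.rpow_add _ _ hV0 hVt,
              show (-1 : ℝ) + (1 - 1 / P j) = -(1 / P j) by ring, mul_comm]
    have hprod : (∏ j, V⁻¹ * I j) ≤ V ^ (-(1 / p)) * ∏ j, J j ^ (1 / P j) := by
      calc (∏ j, V⁻¹ * I j) ≤ ∏ j, V ^ (-(1 / P j)) * J j ^ (1 / P j) :=
            Finset.prod_le_prod' fun j _ => hfac j
        _ = (∏ j, V ^ (-(1 / P j))) * ∏ j, J j ^ (1 / P j) := Finset.prod_mul_distrib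
        _ = V ^ (-(1 / p)) * ∏ j, J j ^ (1 / P j) := by
            rw [← ennreal_rpow_sum _ _ hV0 hVt,
              show ∑ j, -(1 / P j) = -(1 / p) by rw [hp, ← Finset.sum_neg_distrib]]
    have hMorrey : V ^ (1 / p0 - 1 / p) * ∏ j, J j ^ (1 / P j) ≤ N := by
      rw [hNdef, prodMorreyNorm]
      exact le_iSup_of_le (fun i => (S.2 i : ℝ) * (2 : ℝ) ^ (-S.1))
        (le_iSup_of_le ((2 : ℝ) ^ (-S.1)) (le_iSup_of_le hrS le_rfl))
    have h4 : (∏ j, J j ^ (1 / P j)) ≤ V ^ (1 / p - 1 / p0) * N := by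
      calc (∏ j, J j ^ (1 / P j))
          = V ^ (1 / p - 1 / p0) * (V ^ (1 / p0 - 1 / p) * ∏ j, J j ^ (1 / P j)) := by
            rw [← mul_assoc, ← ENNReal.rpow_add _ _ hV0 hVt,
              show (1 / p - 1 / p0) + (1 / p0 - 1 / p) = 0 by ring, ENNReal.rpow_zero, one_mul]
        _ ≤ V ^ (1 / p - 1 / p0) * N := mul_le_mul_right hMorrey _
    have hanti : V ^ (α / (n : ℝ) - 1 / p0) ≤ volume Q0 ^ (α / (n : ℝ) - 1 / p0) := by
      have hQle : volume Q0 ≤ V := measure_mono hSsub.subset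
      rw [show α / (n : ℝ) - 1 / p0 = -(1 / p0 - α / n) by ring, ENNReal.rpow_neg,
        ENNReal.rpow_neg]
      exact ENNReal.inv_le_inv.mpr (ENNReal.rpow_le_rpow hQle (by linarith))
    calc V ^ (α / (n : ℝ)) * ∏ j, V⁻¹ * I j
        ≤ V ^ (α / (n : ℝ)) * (V ^ (-(1 / p)) * (V ^ (1 / p - 1 / p0) * N)) :=
          mul_le_mul_right (hprod.trans (mul_le_mul_right h4 _)) _
      _ = V ^ (α / (n : ℝ) - 1 / p0) * N := by
          rw [← mul_assoc, ← mul_assoc, ← ENNReal.rpow_add _ _ hV0 hVt,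
            ← ENNReal.rpow_add _ _ hV0 hVt,
            show α / (n : ℝ) + -(1 / p) + (1 / p - 1 / p0) = α / (n : ℝ) - 1 / p0 by ring]
      _ ≤ B := mul_le_mul_left hanti N
  -- the pointwise bound on the tail sum
  have hpt : ∀ x, (∑' S : {S : ℤ × (Fin n → ℤ) //
      S ∈ 𝒮 ∧ dyadicCube k0 m0 ⊂ dyadicCube S.1 S.2},
        (E S.1).indicator
          (fun _ => volume (dyadicCube S.1.1 S.1.2) ^ (α / (n : ℝ)) *
            ∏ j, (volume (dyadicCube S.1.1 S.1.2))⁻¹ *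
              ∫⁻ y in dyadicCube S.1.1 S.1.2, ENNReal.ofReal |f j y|) x) ≤ B := by
    intro x
    by_cases hx : ∃ S : {S : ℤ × (Fin n → ℤ) //
        S ∈ 𝒮 ∧ dyadicCube k0 m0 ⊂ dyadicCube S.1 S.2}, x ∈ E S.1
    · obtain ⟨S0, hx0⟩ := hx
      have hzero : ∀ b, b ≠ S0 → (E b.1).indicator
          (fun _ => volume (dyadicCube b.1.1 b.1.2) ^ (α / (n : ℝ)) *
            ∏ j, (volume (dyadicCube b.1.1 b.1.2))⁻¹ *
              ∫⁻ y in dyadicCube b.1.1 b.1.2, ENNReal.ofReal |f j y|) x = 0 := by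
        intro b hb
        refine Set.indicator_of_notMem (fun hxb => ?_) _
        exact Set.disjoint_left.mp (hdisj b.2.1 S0.2.1 fun h => hb (Subtype.ext h)) hxb hx0
      rw [tsum_eq_single S0 hzero, Set.indicator_of_mem hx0]
      exact hc S0.1 S0.2.2
    · push_neg at hx
      have hzero : ∀ S : {S : ℤ × (Fin n → ℤ) //
          S ∈ 𝒮 ∧ dyadicCube k0 m0 ⊂ dyadicCube S.1 S.2}, (E S.1).indicator
          (fun _ => volume (dyadicCube S.1.1 S.1.2) ^ (α / (n : ℝ)) *
            ∏ j, (volume (dyadicCube S.1.1 S.1.2))⁻¹ *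
              ∫⁻ y in dyadicCube S.1.1 S.1.2, ENNReal.ofReal |f j y|) x = 0 :=
        fun S => Set.indicator_of_notMem (hx S) _
      rw [tsum_congr hzero, tsum_zero]
      exact zero_le
  -- integral estimate
  have hint : (∫⁻ x in Q0, (∑' S : {S : ℤ × (Fin n → ℤ) //
      S ∈ 𝒮 ∧ dyadicCube k0 m0 ⊂ dyadicCube S.1 S.2},
        (E S.1).indicator
          (fun _ => volume (dyadicCube S.1.1 S.1.2) ^ (α / (n : ℝ)) *
            ∏ j, (volume (dyadicCube S.1.1 S.1.2))⁻¹ *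
              ∫⁻ y in dyadicCube S.1.1 S.1.2, ENNReal.ofReal |f j y|) x) ^ p ∂μ)
      ≤ B ^ p * μ Q0 := by
    calc _ ≤ ∫⁻ _x in Q0, B ^ p ∂μ :=
          lintegral_mono fun x => ENNReal.rpow_le_rpow (hpt x) hppos.le
      _ = B ^ p * μ Q0 := setLIntegral_const _ _
  have hβ : (0 : ℝ) < (n : ℝ) - α * p := by nlinarith
  have hμQ : μ Q0 ≤ G * t ^ ((n : ℝ) - α * p) := by
    have h1 : μ Q0 / t ^ ((n : ℝ) - α * p) ≤ G := by
      rw [hGdef, measureGrowthNorm]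
      exact le_iSup_of_le (fun i => (m0 i : ℝ) * r0) (le_iSup_of_le r0 (le_iSup_of_le hr0 le_rfl))
    exact (ENNReal.div_le_iff
      (ENNReal.rpow_pos (ENNReal.ofReal_pos.mpr hr0) httop).ne'
      (ENNReal.rpow_ne_top_of_nonneg hβ.le httop)).mp h1
  have hcollapse : t ^ ((n : ℝ) * (1 / p0 - 1 / p)) * t ^ ((n : ℝ) * (α / (n : ℝ) - 1 / p0)) *
      t ^ (((n : ℝ) - α * p) * (1 / p)) = 1 := by
    rw [← ENNReal.rpow_add _ _ ht0 httop, ← ENNReal.rpow_add _ _ ht0 httop,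
      show (n : ℝ) * (1 / p0 - 1 / p) + (n : ℝ) * (α / (n : ℝ) - 1 / p0) +
        ((n : ℝ) - α * p) * (1 / p) = 0 by field_simp; ring, ENNReal.rpow_zero]
  calc volume Q0 ^ (1 / p0 - 1 / p) * (∫⁻ x in Q0, (∑' S : {S : ℤ × (Fin n → ℤ) //
        S ∈ 𝒮 ∧ dyadicCube k0 m0 ⊂ dyadicCube S.1 S.2},
          (E S.1).indicator
            (fun _ => volume (dyadicCube S.1.1 S.1.2) ^ (α / (n : ℝ)) *
              ∏ j, (volume (dyadicCube S.1.1 S.1.2))⁻¹ *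
                ∫⁻ y in dyadicCube S.1.1 S.1.2, ENNReal.ofReal |f j y|) x) ^ p ∂μ) ^ (1 / p)
      ≤ volume Q0 ^ (1 / p0 - 1 / p) * (B ^ p * μ Q0) ^ (1 / p) :=
        mul_le_mul_right (ENNReal.rpow_le_rpow hint (by positivity)) _
    _ = volume Q0 ^ (1 / p0 - 1 / p) * (B * μ Q0 ^ (1 / p)) := by
        rw [ENNReal.mul_rpow_of_nonneg _ _ (by positivity : (0:ℝ) ≤ 1 / p),
          ← ENNReal.rpow_mul B p (1 / p), mul_one_div_cancel hppos.ne', ENNReal.rpow_one]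
    _ ≤ volume Q0 ^ (1 / p0 - 1 / p) * (B * (G * t ^ ((n : ℝ) - α * p)) ^ (1 / p)) :=
        mul_le_mul_right (mul_le_mul_right (ENNReal.rpow_le_rpow hμQ (by positivity)) B) _
    _ = G ^ (1 / p) * N := by
        rw [hBdef, hvolQ0, ENNReal.mul_rpow_of_nonneg G _ (by positivity : (0:ℝ) ≤ 1 / p),
          ← ENNReal.rpow_mul t, ← ENNReal.rpow_mul t, ← ENNReal.rpow_mul t]
        calc t ^ ((n : ℝ) * (1 / p0 - 1 / p)) *
            (t ^ ((n : ℝ) * (α / (n : ℝ) - 1 / p0)) * N *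
              (G ^ (1 / p) * t ^ (((n : ℝ) - α * p) * (1 / p))))
            = (t ^ ((n : ℝ) * (1 / p0 - 1 / p)) * t ^ ((n : ℝ) * (α / (n : ℝ) - 1 / p0)) *
                t ^ (((n : ℝ) - α * p) * (1 / p))) * (G ^ (1 / p) * N) := by ring
          _ = G ^ (1 / p) * N := by rw [hcollapse, one_mul]
    _ ≤ 1 * G ^ (1 / p) * N := by rw [one_mul]
end
end
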